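/- Let n ≥ 5 be an integer. Let Q(t) = 1 + Σ_{k=2}^{n−1} b_k t^k + t^n be a real polynomial with all coefficients b_k ≥ 0, and let P(t) = Σ_{k=2}^{ℓ} a_k t^k be a real polynomial with all coefficients a_k ≥ 0, degree bound ℓ ≤ 2n − 1, and P(1) ≤ n. Then for every integer m ≥ n and every real t ≥ 1, one has m·P(t) < Q(t)^m. -/

import Mathlib

lemma aux_pow_bound (x : ℝ) (hx : 1 ≤ x) :
    ∀ m : ℕ, 5 ≤ m → 1 + (m : ℝ) ^ 2 * x ^ 2 ≤ (1 + x) ^ m := by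
  intro m hm
  induction m, hm using Nat.le_induction with
  | base =>
    have h3 := pow_le_pow_right₀ hx (show 2 ≤ 3 by norm_num)
    have h4 := pow_le_pow_right₀ hx (show 2 ≤ 4 by norm_num)
    have h5 := pow_le_pow_right₀ hx (show 2 ≤ 5 by norm_num)
    push_cast
    nlinarith [h3, h4, h5, hx, sq_nonneg x]
  | succ m hm ih =>
    have hm5 : (5 : ℝ) ≤ (m : ℝ) := by exact_mod_cast hm
    have hx0 : (0 : ℝ) ≤ 1 + x := by linarith
    have h1 : (1 + (m : ℝ) ^ 2 * x ^ 2) * (1 + x) ≤ (1 + x) ^ m * (1 + x) := by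
      apply mul_le_mul_of_nonneg_right ih hx0
    have h2 : 1 + ((m : ℝ) + 1) ^ 2 * x ^ 2 ≤ (1 + (m : ℝ) ^ 2 * x ^ 2) * (1 + x) := by
      have hA : (0:ℝ) ≤ (m:ℝ)^2 * x^2 * (x - 1) :=
        mul_nonneg (by positivity) (by linarith)
      have hB : (0:ℝ) ≤ ((m:ℝ)^2 - 2*(m:ℝ) - 1) * x^2 :=
        mul_nonneg (by nlinarith) (sq_nonneg x)
      nlinarith [hA, hB, hx]
    have goal' : 1 + ((m:ℝ) + 1) ^ 2 * x ^ 2 ≤ (1 + x) ^ (m + 1) := by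
      rw [pow_succ]; exact le_trans h2 h1
    push_cast
    exact goal'

theorem stmt_6 (n : ℕ) (hn : 5 ≤ n) (ℓ : ℕ) (hℓ : ℓ ≤ 2 * n - 1)
    (a b : ℕ → ℝ) (ha : ∀ k, 0 ≤ a k) (hb : ∀ k, 0 ≤ b k)
    (P Q : ℝ → ℝ)
    (hPdef : ∀ t : ℝ, P t = ∑ k ∈ Finset.Icc 2 ℓ, a k * t ^ k)
    (hQdef : ∀ t : ℝ, Q t = 1 + (∑ k ∈ Finset.Icc 2 (n - 1), b k * t ^ k) + t ^ n)
    (hP1 : P 1 ≤ (n : ℝ)) :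
    ∀ m : ℕ, n ≤ m → ∀ t : ℝ, 1 ≤ t → (m : ℝ) * P t < Q t ^ m := by
  intro m hm t ht
  have ht0 : (0 : ℝ) ≤ t := by linarith
  set x := t ^ n with hxdef
  have hx1 : 1 ≤ x := by
    calc (1:ℝ) = 1 ^ n := (one_pow n).symm
      _ ≤ t ^ n := pow_le_pow_left₀ zero_le_one ht n
  -- sum of a's ≤ n
  have hP1' : (∑ k ∈ Finset.Icc 2 ℓ, a k) ≤ (n : ℝ) := by
    have := hP1
    rw [hPdef] at this
    simpa using this
  -- P t ≤ n * t^(2n-1)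
  have hPt : P t ≤ (n : ℝ) * t ^ (2 * n - 1) := by
    rw [hPdef]
    calc ∑ k ∈ Finset.Icc 2 ℓ, a k * t ^ k
        ≤ ∑ k ∈ Finset.Icc 2 ℓ, a k * t ^ (2 * n - 1) := by
          apply Finset.sum_le_sum
          intro k hk
          exact mul_le_mul_of_nonneg_left
            (pow_le_pow_right₀ ht (le_trans (Finset.mem_Icc.mp hk).2 hℓ)) (ha k)
      _ = (∑ k ∈ Finset.Icc 2 ℓ, a k) * t ^ (2 * n - 1) := by rw [Finset.sum_mul]
      _ ≤ (n : ℝ) * t ^ (2 * n - 1) :=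
          mul_le_mul_of_nonneg_right hP1' (pow_nonneg ht0 _)
  -- t^(2n-1) ≤ x^2
  have ht2 : t ^ (2 * n - 1) ≤ x ^ 2 := by
    rw [hxdef, ← pow_mul]
    exact pow_le_pow_right₀ ht (by omega)
  -- Q t ≥ 1 + x
  have hQt : 1 + x ≤ Q t := by
    rw [hQdef]
    have hs : 0 ≤ ∑ k ∈ Finset.Icc 2 (n - 1), b k * t ^ k :=
      Finset.sum_nonneg fun k _ => mul_nonneg (hb k) (pow_nonneg ht0 k)
    linarith
  have hQ0 : (0 : ℝ) ≤ 1 + x := by linarith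
  have h1 : (1 + x) ^ m ≤ Q t ^ m := pow_le_pow_left₀ hQ0 hQt m
  have h2 : 1 + (m : ℝ) ^ 2 * x ^ 2 ≤ (1 + x) ^ m :=
    aux_pow_bound x hx1 m (le_trans hn hm)
  have hmn : (n : ℝ) ≤ (m : ℝ) := by exact_mod_cast hm
  have hm0 : (0 : ℝ) ≤ (m : ℝ) := by positivity
  have hn0 : (0 : ℝ) ≤ (n : ℝ) := by positivity
  have hx20 : (0 : ℝ) ≤ x ^ 2 := sq_nonneg x
  have hnt : (n : ℝ) * t ^ (2 * n - 1) ≤ (m : ℝ) * x ^ 2 :=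
    mul_le_mul hmn ht2 (pow_nonneg ht0 _) hm0
  have h3 : (m : ℝ) * P t ≤ (m : ℝ) * ((m : ℝ) * x ^ 2) :=
    mul_le_mul_of_nonneg_left (le_trans hPt hnt) hm0
  nlinarith [h1, h2, h3]
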